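/- If \pi is chosen uniformly at random from the matchings in S_{2n}, then the expected value of the descent number d(\pi) = |Des(\pi)| + 1 is n + 1. -/

import Mathlib

open Finset

/-- A matching (fixed point free involution). -/
def IsMatching {m : ℕ} (π : Equiv.Perm (Fin m)) : Prop :=
  π * π = 1 ∧ ∀ i, π i ≠ i

instance {m : ℕ} (π : Equiv.Perm (Fin m)) : Decidable (IsMatching π) := by
  unfold IsMatching; infer_instance

/-- The set of matchings in `S_{2n}`. -/
def matchings (n : ℕ) : Finset (Equiv.Perm (Fin (2 * n))) :=
  Finset.univ.filter IsMatching

/-- Descent set (0-based indices `i` with `π i > π (i+1)`). -/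
def desSet {m : ℕ} (π : Equiv.Perm (Fin m)) : Finset (Fin m) :=
  Finset.univ.filter fun i =>
    if h : (i : ℕ) + 1 < m then π ⟨(i : ℕ) + 1, h⟩ < π i else False

/-- Descent number `d(π) = |Des(π)| + 1`. -/
def desNum {m : ℕ} (π : Equiv.Perm (Fin m)) : ℕ := (desSet π).card + 1

/-- Major index: sum of the (1-based) descent positions. -/
def maj {m : ℕ} (π : Equiv.Perm (Fin m)) : ℕ := ∑ i ∈ desSet π, ((i : ℕ) + 1)

/-- The double factorial `(2n-1)!! = ∏_{i=1}^n (2i-1)`. -/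
def doubleFac (n : ℕ) : ℕ := ∏ i ∈ Finset.range n, (2 * i + 1)

lemma mem_matchings {n : ℕ} {π : Equiv.Perm (Fin (2*n))} :
    π ∈ matchings n ↔ IsMatching π := by simp [matchings]

lemma IsMatching.apply_apply {m : ℕ} {π : Equiv.Perm (Fin m)} (h : IsMatching π) (i : Fin m) :
    π (π i) = i := by
  have := congrArg (fun σ : Equiv.Perm (Fin m) => σ i) h.1
  simpa [Equiv.Perm.mul_apply] using this

lemma IsMatching.conj {m : ℕ} {π : Equiv.Perm (Fin m)} (h : IsMatching π)
    (σ : Equiv.Perm (Fin m)) : IsMatching (σ * π * σ⁻¹) := by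
  constructor
  · have : σ * π * σ⁻¹ * (σ * π * σ⁻¹) = σ * (π * π) * σ⁻¹ := by group
    rw [this, h.1]; group
  · intro i hi
    simp only [Equiv.Perm.mul_apply] at hi
    have : π (σ⁻¹ i) = σ⁻¹ i := by
      apply σ.injective
      rw [hi]; simp
    exact h.2 _ this

lemma IsMatching.conj_swap {m : ℕ} {π : Equiv.Perm (Fin m)} (h : IsMatching π)
    (a b : Fin m) : IsMatching (Equiv.swap a b * π * Equiv.swap a b) := by
  have := h.conj (Equiv.swap a b)
  rwa [Equiv.swap_inv] at this

def exMatching (n : ℕ) : Equiv.Perm (Fin (2*n)) :=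
  finProdFinEquiv.permCongr ((Equiv.swap (0 : Fin 2) 1).prodCongr (Equiv.refl (Fin n)))

lemma exMatching_isMatching (n : ℕ) : IsMatching (exMatching n) := by
  constructor
  · ext x
    simp only [exMatching, Equiv.Perm.mul_apply, Equiv.permCongr_apply,
      Equiv.Perm.one_apply, Equiv.symm_apply_apply, Equiv.prodCongr_apply, Prod.map,
      Equiv.swap_apply_self, Equiv.refl_apply, Prod.mk.eta, Equiv.apply_symm_apply]
  · intro i hi
    simp only [exMatching, Equiv.permCongr_apply] at hi
    have h2 := congrArg finProdFinEquiv.symm hi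
    rw [Equiv.symm_apply_apply] at h2
    have h3 := congrArg Prod.fst h2
    simp only [Equiv.prodCongr_apply, Prod.map] at h3
    revert h3
    generalize (finProdFinEquiv.symm i).1 = a
    revert a; decide

lemma matchings_nonempty (n : ℕ) : (matchings n).Nonempty :=
  ⟨exMatching n, mem_matchings.mpr (exMatching_isMatching n)⟩

lemma fiber_card_eq {n : ℕ} (i j j' : Fin (2*n)) (hj : j ≠ i) (hj' : j' ≠ i) :
    ((matchings n).filter fun π => π i = j).card
      = ((matchings n).filter fun π => π i = j').card := by
  rcases eq_or_ne j j' with rfl | hjj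
  · rfl
  have key : ∀ (a b : Fin (2*n)), a ≠ i → b ≠ i → a ≠ b →
      ∀ π ∈ (matchings n).filter fun π => π i = a,
      (Equiv.swap a b * π * Equiv.swap a b) ∈ (matchings n).filter fun π => π i = b := by
    intro a b ha hb hab π hπ
    rw [Finset.mem_filter] at hπ ⊢
    obtain ⟨hm, hv⟩ := hπ
    refine ⟨mem_matchings.mpr ((mem_matchings.mp hm).conj_swap a b), ?_⟩
    simp only [Equiv.Perm.mul_apply]
    rw [Equiv.swap_apply_of_ne_of_ne ha.symm hb.symm, hv, Equiv.swap_apply_left]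
  have inv : ∀ (a b : Fin (2*n)) (π : Equiv.Perm (Fin (2*n))),
      Equiv.swap a b * (Equiv.swap a b * π * Equiv.swap a b) * Equiv.swap a b = π := by
    intro a b π
    rw [show Equiv.swap a b * (Equiv.swap a b * π * Equiv.swap a b) * Equiv.swap a b
      = (Equiv.swap a b * Equiv.swap a b) * π * (Equiv.swap a b * Equiv.swap a b) by group,
      Equiv.swap_mul_self]
    group
  refine Finset.card_bij' (fun π _ => Equiv.swap j j' * π * Equiv.swap j j')
    (fun π _ => Equiv.swap j j' * π * Equiv.swap j j') ?_ ?_ ?_ ?_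
  · intro π hπ; exact key j j' hj hj' hjj π hπ
  · intro π hπ
    have := key j' j hj' hj hjj.symm π hπ
    rwa [Equiv.swap_comm] at this
  · intro π _; exact inv j j' π
  · intro π _; exact inv j j' π

lemma card_matchings_eq_fiber {n : ℕ} (i j : Fin (2*n)) (hj : j ≠ i) :
    (matchings n).card = (2*n - 1) * ((matchings n).filter fun π => π i = j).card := by
  rw [Finset.card_eq_sum_card_fiberwise (f := fun π => π i) (t := Finset.univ.erase i)
    (fun π hπ => Finset.mem_erase.mpr ⟨(mem_matchings.mp hπ).2 i, Finset.mem_univ _⟩)]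
  rw [Finset.sum_congr rfl (fun j' hj' =>
    fiber_card_eq i j' j (Finset.ne_of_mem_erase hj') hj)]
  rw [Finset.sum_const, Finset.card_erase_of_mem (Finset.mem_univ i)]
  simp [smul_eq_mul]

lemma card_descent {n : ℕ} (i : Fin (2*n)) (h : (i:ℕ)+1 < 2*n) :
    2 * ((matchings n).filter fun π => π ⟨(i:ℕ)+1, h⟩ < π i).card
      = (matchings n).card + ((matchings n).filter fun π => π i = ⟨(i:ℕ)+1, h⟩).card := by
  set i1 : Fin (2*n) := ⟨(i:ℕ)+1, h⟩ with hi1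
  have hne : i ≠ i1 := by
    intro he; have := congrArg Fin.val he; simp [hi1] at this
  have hlt : i < i1 := by
    rw [Fin.lt_def]; simp [hi1]
  set A := (matchings n).filter fun π => π i1 < π i with hA
  set B := (matchings n).filter fun π => π i < π i1 with hB
  set S := (matchings n).filter fun π => π i = i1 with hS
  -- S ⊆ A
  have hSA : S ⊆ A := by
    intro π hπ
    rw [Finset.mem_filter] at hπ ⊢
    obtain ⟨hm, hv⟩ := hπ
    refine ⟨hm, ?_⟩
    have : π i1 = i := by
      rw [← hv]; exact (mem_matchings.mp hm).apply_apply i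
    rw [this, hv]; exact hlt
  -- M = A + B
  have hMAB : (matchings n).card = A.card + B.card := by
    rw [hA, hB, ← Finset.card_filter_add_card_filter_not
      (p := fun π => π i1 < π i) (s := matchings n)]
    congr 1
    apply Finset.card_bij' (fun π _ => π) (fun π _ => π)
    · intro π hπ
      rw [Finset.mem_filter] at hπ ⊢
      refine ⟨hπ.1, ?_⟩
      have hne2 : π i ≠ π i1 := fun he => hne (π.injective he)
      exact lt_of_le_of_ne (not_lt.mp hπ.2) hne2
    · intro π hπ
      rw [Finset.mem_filter] at hπ ⊢
      exact ⟨hπ.1, not_lt.mpr (le_of_lt hπ.2)⟩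
    · intro π _; rfl
    · intro π _; rfl
  -- B ≃ A \ S via conjugation by swap i i1
  have conj_vals : ∀ π : Equiv.Perm (Fin (2*n)), IsMatching π → π i ≠ i1 →
      ((Equiv.swap i i1 * π * Equiv.swap i i1) i = π i1
       ∧ (Equiv.swap i i1 * π * Equiv.swap i i1) i1 = π i) := by
    intro π hm hv
    have h1 : π i ≠ i := hm.2 i
    have h2 : π i1 ≠ i1 := hm.2 i1
    have h3 : π i1 ≠ i := by
      intro he
      apply hv
      rw [← he]; exact hm.apply_apply i1
    constructor
    · simp only [Equiv.Perm.mul_apply, Equiv.swap_apply_left]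
      exact Equiv.swap_apply_of_ne_of_ne h3 h2
    · simp only [Equiv.Perm.mul_apply, Equiv.swap_apply_right]
      exact Equiv.swap_apply_of_ne_of_ne h1 hv
  have hBAS : B.card = (A \ S).card := by
    apply Finset.card_bij' (fun π _ => Equiv.swap i i1 * π * Equiv.swap i i1)
      (fun π _ => Equiv.swap i i1 * π * Equiv.swap i i1)
    · intro π hπ
      rw [hB, Finset.mem_filter] at hπ
      obtain ⟨hm, hv⟩ := hπ
      have hm' := mem_matchings.mp hm
      have hne1 : π i ≠ i1 := by
        intro he
        have : π i1 = i := by rw [← he]; exact hm'.apply_apply i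
        rw [he, this] at hv
        exact absurd hv (not_lt.mpr (le_of_lt hlt))
      obtain ⟨e1, e2⟩ := conj_vals π hm' hne1
      rw [Finset.mem_sdiff, hA, hS, Finset.mem_filter, Finset.mem_filter]
      refine ⟨⟨mem_matchings.mpr (hm'.conj_swap i i1), ?_⟩, ?_⟩
      · rw [e1, e2]; exact hv
      · push_neg
        intro hmm
        rw [e1]
        intro he
        exact (hm'.2 i1) (by rw [he])
    · intro π hπ
      rw [Finset.mem_sdiff, hA, hS, Finset.mem_filter, Finset.mem_filter] at hπ
      obtain ⟨⟨hm, hv⟩, hns⟩ := hπ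
      have hm' := mem_matchings.mp hm
      have hne1 : π i ≠ i1 := by
        intro he; exact hns ⟨hm, he⟩
      obtain ⟨e1, e2⟩ := conj_vals π hm' hne1
      rw [hB, Finset.mem_filter]
      refine ⟨mem_matchings.mpr (hm'.conj_swap i i1), ?_⟩
      rw [e1, e2]; exact hv
    · intro π _
      rw [show Equiv.swap i i1 * (Equiv.swap i i1 * π * Equiv.swap i i1) * Equiv.swap i i1
        = (Equiv.swap i i1 * Equiv.swap i i1) * π * (Equiv.swap i i1 * Equiv.swap i i1) by group,
        Equiv.swap_mul_self]
      group
    · intro π _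
      rw [show Equiv.swap i i1 * (Equiv.swap i i1 * π * Equiv.swap i i1) * Equiv.swap i i1
        = (Equiv.swap i i1 * Equiv.swap i i1) * π * (Equiv.swap i i1 * Equiv.swap i i1) by group,
        Equiv.swap_mul_self]
      group
  have hsd : (A \ S).card = A.card - S.card := Finset.card_sdiff_of_subset hSA
  have hle : S.card ≤ A.card := Finset.card_le_card hSA
  omega


lemma pos_card {n : ℕ} (i : Fin (2*n)) :
    2 * (2*n - 1) * ((matchings n).filter fun π =>
        if h : (i : ℕ) + 1 < 2*n then π ⟨(i : ℕ) + 1, h⟩ < π i else False).card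
      = if (i : ℕ) + 1 < 2*n then 2*n*(matchings n).card else 0 := by
  by_cases h : (i : ℕ) + 1 < 2*n
  · rw [if_pos h]
    have hfilter : ((matchings n).filter fun π =>
        if h' : (i : ℕ) + 1 < 2*n then π ⟨(i : ℕ) + 1, h'⟩ < π i else False)
        = (matchings n).filter fun π => π ⟨(i : ℕ) + 1, h⟩ < π i := by
      apply Finset.filter_congr
      intro π _
      simp [h]
    rw [hfilter]
    have e1 := card_descent i h
    have e2 := card_matchings_eq_fiber i ⟨(i : ℕ) + 1, h⟩
      (by intro he; have := congrArg Fin.val he; simp at this)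
    set K := 2*n - 1 with hK
    set v := ((matchings n).filter fun π => π ⟨(i : ℕ) + 1, h⟩ < π i).card
    set m := (matchings n).card
    set s := ((matchings n).filter fun π => π i = ⟨(i : ℕ) + 1, h⟩).card
    have hKn : K + 1 = 2*n := by omega
    calc 2 * K * v = K * (2 * v) := by ring
      _ = K * (m + s) := by rw [e1]
      _ = K * m + K * s := by ring
      _ = K * m + m := by rw [← e2]
      _ = (K + 1) * m := by ring
      _ = 2*n*m := by rw [hKn]
  · rw [if_neg h]
    have : ((matchings n).filter fun π =>
        if h' : (i : ℕ) + 1 < 2*n then π ⟨(i : ℕ) + 1, h'⟩ < π i else False) = ∅ := by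
      apply Finset.filter_false_of_mem
      intro π _
      simp [h]
    rw [this]
    simp

lemma sum_desSet_card {n : ℕ} (hn : 1 ≤ n) :
    (∑ π ∈ matchings n, (desSet π).card) = n * (matchings n).card := by
  have step1 : (∑ π ∈ matchings n, (desSet π).card)
      = ∑ i : Fin (2*n), ((matchings n).filter fun π =>
          if h : (i : ℕ) + 1 < 2*n then π ⟨(i : ℕ) + 1, h⟩ < π i else False).card := by
    simp_rw [desSet, Finset.card_filter]
    rw [Finset.sum_comm]
  have step2 : 2 * (2*n - 1) * (∑ π ∈ matchings n, (desSet π).card)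
      = 2 * (2*n - 1) * (n * (matchings n).card) := by
    rw [step1, Finset.mul_sum]
    rw [Finset.sum_congr rfl (fun i _ => pos_card i)]
    rw [Fin.sum_univ_eq_sum_range (fun k => if k + 1 < 2*n then 2*n*(matchings n).card else 0)]
    rw [← Finset.sum_filter]
    have hfil : (Finset.range (2*n)).filter (fun k => k + 1 < 2*n) = Finset.range (2*n - 1) := by
      ext k; simp [Finset.mem_range]; omega
    rw [hfil, Finset.sum_const, Finset.card_range, smul_eq_mul]
    generalize 2*n - 1 = K
    ring
  have hpos : 0 < 2 * (2*n - 1) := by omega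
  exact Nat.eq_of_mul_eq_mul_left hpos step2

theorem stmt3 (n : ℕ) (hn : 1 ≤ n) :
    (∑ π ∈ matchings n, (desNum π : ℚ)) / (matchings n).card = n + 1 := by
  have hsum : (∑ π ∈ matchings n, desNum π) = (n + 1) * (matchings n).card := by
    simp_rw [desNum]
    rw [Finset.sum_add_distrib, sum_desSet_card hn, Finset.sum_const, smul_eq_mul]
    ring
  have hM : ((matchings n).card : ℚ) ≠ 0 := by
    have := (matchings_nonempty n).card_pos
    positivity
  have hcast : (∑ π ∈ matchings n, (desNum π : ℚ))
      = ((∑ π ∈ matchings n, desNum π : ℕ) : ℚ) := by push_cast; rfl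
  rw [hcast, hsum]
  push_cast
  field_simp
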